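/- Let 0 ≤ α < 1 and let f = h + conj(g) belong to the class F(α), with power series h(z) = z + Σ_{k≥2} a_k z^k on 𝔻. Then for every n ≥ 2, |a_n| ≤ A_n(α), where A_n(α) = (1/n!)·∏_{j=2}^{n} (j − 2α). -/

import Mathlib

open Complex Metric ComplexConjugate

/-- `L(r,α) = ∫₀^r (1−ρ)(1+ρ)^{2α−2} dρ`. -/
noncomputable def Lfun (r α : ℝ) : ℝ := ∫ ρ in (0:ℝ)..r, (1 - ρ) * (1 + ρ) ^ (2 * α - 2)

/-- `A(r,α) = ((1−r²)/r²)·L(r,α)²`. -/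
noncomputable def Afun (r α : ℝ) : ℝ := ((1 - r ^ 2) / r ^ 2) * (Lfun r α) ^ 2

/-- `A_k(α) = (1/k!)·∏_{j=2}^k (j − 2α)`. -/
noncomputable def coefA (α : ℝ) (k : ℕ) : ℝ :=
  (1 / (Nat.factorial k : ℝ)) * ∏ j ∈ Finset.Icc 2 k, ((j : ℝ) - 2 * α)

/-- `ψ(n,m,r,α)`. -/
noncomputable def psiFun (n m : ℕ) (r α : ℝ) : ℝ :=
  Afun r α
    - ∑' k : ℕ, (((n : ℝ) + 1 + k) * coefA α (n + 1 + k) * r ^ (n + k))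
    - ∑' k : ℕ, ((((m : ℝ) + 1 + k) * (((m : ℝ) + 1 + k) - 1) / (((m : ℝ) + 1 + k) - 2 * α))
        * coefA α (m + 1 + k) * r ^ (m + k))

/-- Membership in the class `F(α)`. -/
def MemF (α : ℝ) (h g : ℂ → ℂ) : Prop :=
  DifferentiableOn ℂ h (ball 0 1) ∧ DifferentiableOn ℂ g (ball 0 1) ∧
  h 0 = 0 ∧ g 0 = 0 ∧ deriv h 0 = 1 ∧
  (∀ z ∈ ball (0 : ℂ) 1, deriv h z ≠ 0) ∧
  (∀ z ∈ ball (0 : ℂ) 1, α < (1 + z * deriv (deriv h) z / deriv h z).re) ∧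
  (∃ θ : ℝ, ∀ z ∈ ball (0 : ℂ) 1, deriv g z = Complex.exp (θ * Complex.I) * z * deriv h z)



section Aux
open intervalIntegral
open scoped Real Topology

/-- Taylor coefficient at 0. -/
noncomputable def auxTC (f : ℂ → ℂ) (n : ℕ) : ℂ := iteratedDeriv n f 0 / n.factorial

lemma auxTC_zero (f : ℂ → ℂ) : auxTC f 0 = f 0 := by
  simp [auxTC, iteratedDeriv_zero]

lemma aux_coeff_eq_tc {f : ℂ → ℂ} {p : FormalMultilinearSeries ℂ ℂ ℂ} {r : ENNReal}
    (hp : HasFPowerSeriesOnBall f p 0 r) (n : ℕ) : p.coeff n = auxTC f n := by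
  have h1 := hp.factorial_smul (1 : ℂ) n
  have hf : ((n.factorial : ℂ)) ≠ 0 := Nat.cast_ne_zero.mpr n.factorial_ne_zero
  have h2 : (n.factorial : ℂ) * p.coeff n = iteratedDeriv n f 0 := by
    rw [iteratedDeriv_eq_iteratedFDeriv, ← h1, FormalMultilinearSeries.coeff, nsmul_eq_mul]
    congr 1
  rw [auxTC, ← h2]
  field_simp

lemma aux_tc_deriv (f : ℂ → ℂ) (n : ℕ) :
    auxTC (deriv f) n = (n + 1) * auxTC f (n + 1) := by
  have hne : ((n:ℂ)+1) ≠ 0 := Nat.cast_add_one_ne_zero n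
  have hf : ((n.factorial : ℂ)) ≠ 0 := Nat.cast_ne_zero.mpr n.factorial_ne_zero
  simp only [auxTC, ← iteratedDeriv_succ', Nat.factorial_succ]
  push_cast
  field_simp

lemma aux_hasFPSOB {f : ℂ → ℂ} (hf : DifferentiableOn ℂ f (ball (0:ℂ) 1))
    {R : NNReal} (h0 : 0 < R) (h1 : (R:ℝ) < 1) :
    HasFPowerSeriesOnBall f (cauchyPowerSeries f 0 R) 0 R := by
  refine DifferentiableOn.hasFPowerSeriesOnBall ?_ h0
  exact hf.mono (closedBall_subset_ball h1)

lemma aux_rep {f : ℂ → ℂ} (hf : DifferentiableOn ℂ f (ball (0:ℂ) 1))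
    {z : ℂ} (hz : z ∈ ball (0:ℂ) 1) :
    HasSum (fun n => auxTC f n * z ^ n) (f z) ∧
      Summable (fun n => ‖auxTC f n * z ^ n‖) := by
  rw [mem_ball_zero_iff] at hz
  set r : ℝ := (1 + ‖z‖) / 2 with hr
  have hz0 : (0:ℝ) ≤ ‖z‖ := norm_nonneg z
  have hrz : ‖z‖ < r := by rw [hr]; linarith
  have hr0 : (0:ℝ) < r := by rw [hr]; linarith
  have hr1 : r < 1 := by rw [hr]; linarith
  set R : NNReal := ⟨r, hr0.le⟩ with hR
  have hp : HasFPowerSeriesOnBall f (cauchyPowerSeries f 0 R) 0 R :=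
    aux_hasFPSOB hf (by exact_mod_cast hr0) hr1
  have hzR : z ∈ Metric.eball (0:ℂ) (R : ENNReal) := by
    rw [mem_emetric_ball_zero_iff]
    exact_mod_cast hrz
  have hsum := hp.hasSum hzR
  simp only [zero_add] at hsum
  constructor
  · refine hsum.congr_fun (fun n => ?_)
    rw [FormalMultilinearSeries.apply_eq_pow_smul_coeff, aux_coeff_eq_tc hp, smul_eq_mul]
    ring
  · have hrad : (‖z‖₊ : ENNReal) < (cauchyPowerSeries f 0 R).radius :=
      lt_of_lt_of_le (by exact_mod_cast hrz) hp.r_le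
    have hs := (cauchyPowerSeries f 0 R).summable_norm_mul_pow hrad
    apply hs.congr
    intro n
    rw [FormalMultilinearSeries.norm_apply_eq_norm_coef, aux_coeff_eq_tc hp]
    rw [norm_mul, norm_pow]
    norm_cast

lemma aux_uniq {b₁ b₂ : ℕ → ℂ} {F : ℂ → ℂ}
    (h₁ : ∀ z ∈ ball (0:ℂ) 1, HasSum (fun k => b₁ k * z ^ k) (F z))
    (h₂ : ∀ z ∈ ball (0:ℂ) 1, HasSum (fun k => b₂ k * z ^ k) (F z)) : b₁ = b₂ := by
  have key : ∀ (b : ℕ → ℂ), (∀ z ∈ ball (0:ℂ) 1, HasSum (fun k => b k * z ^ k) (F z)) →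
      HasFPowerSeriesOnBall F (FormalMultilinearSeries.ofScalars ℂ b) 0 1 := by
    intro b hb
    have hrad : 1 ≤ (FormalMultilinearSeries.ofScalars ℂ b).radius := by
      apply ENNReal.le_of_forall_nnreal_lt
      intro s hs
      have hs1 : (s:ℝ) < 1 := by exact_mod_cast hs
      have hmem : ((s:ℝ):ℂ) ∈ ball (0:ℂ) 1 := by
        rw [mem_ball_zero_iff, Complex.norm_real, Real.norm_eq_abs, NNReal.abs_eq s]
        exact hs1
      have := (hb _ hmem).summable.tendsto_atTop_zero
      apply FormalMultilinearSeries.le_radius_of_isBigO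
      have hbig : (fun n => b n * ((s:ℝ):ℂ) ^ n) =O[Filter.atTop] (fun _ => (1:ℝ)) :=
        this.isBigO_one ℝ
      apply hbig.norm_left.congr_left
      intro n
      rw [FormalMultilinearSeries.ofScalars_norm, norm_mul, norm_pow, Complex.norm_real,
        Real.norm_eq_abs, NNReal.abs_eq s]
    refine ⟨hrad, one_pos, ?_⟩
    intro y hy
    have hy' : y ∈ ball (0:ℂ) 1 := by
      rw [mem_ball_zero_iff]
      rw [mem_emetric_ball_zero_iff, ← ofReal_norm] at hy
      exact (ENNReal.ofReal_lt_one).mp hy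
    rw [zero_add]
    simp only [FormalMultilinearSeries.ofScalars_apply_eq, smul_eq_mul]
    exact hb y hy'
  have heq := ((key b₁ h₁).hasFPowerSeriesAt).eq_formalMultilinearSeries
    ((key b₂ h₂).hasFPowerSeriesAt)
  exact FormalMultilinearSeries.ofScalars_series_injective _ _ heq

lemma aux_deriv_diffOn {f : ℂ → ℂ} (hf : DifferentiableOn ℂ f (ball (0:ℂ) 1)) :
    DifferentiableOn ℂ (deriv f) (ball (0:ℂ) 1) := by
  have h1 : AnalyticOnNhd ℂ f (ball (0:ℂ) 1) :=
    fun z hz => hf.analyticAt (isOpen_ball.mem_nhds hz)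
  exact h1.deriv.differentiableOn

lemma aux_cauchy_prod {b₁ b₂ : ℕ → ℂ} {x y z : ℂ}
    (h₁ : HasSum (fun k => b₁ k * z ^ k) x) (hs₁ : Summable (fun k => ‖b₁ k * z ^ k‖))
    (h₂ : HasSum (fun k => b₂ k * z ^ k) y) (hs₂ : Summable (fun k => ‖b₂ k * z ^ k‖)) :
    HasSum (fun n => (∑ k ∈ Finset.range (n+1), b₁ k * b₂ (n-k)) * z ^ n) (x * y) := by
  have hprod := hasSum_sum_range_mul_of_summable_norm hs₁ hs₂
  rw [h₁.tsum_eq, h₂.tsum_eq] at hprod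
  have hterm : ∀ n, ∑ k ∈ Finset.range (n+1), (b₁ k * z ^ k) * (b₂ (n-k) * z ^ (n-k))
      = (∑ k ∈ Finset.range (n+1), b₁ k * b₂ (n-k)) * z ^ n := by
    intro n
    rw [Finset.sum_mul]
    apply Finset.sum_congr rfl
    intro k hk
    rw [Finset.mem_range, Nat.lt_succ_iff] at hk
    have : z ^ k * z ^ (n - k) = z ^ n := by
      rw [← pow_add]
      congr 1
      omega
    calc b₁ k * z ^ k * (b₂ (n - k) * z ^ (n - k))
        = b₁ k * b₂ (n - k) * (z ^ k * z ^ (n - k)) := by ring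
      _ = b₁ k * b₂ (n - k) * z ^ n := by rw [this]
  apply hprod.congr_fun fun n => (hterm n).symm

lemma aux_shift {b : ℕ → ℂ} {x z : ℂ}
    (h : HasSum (fun k => b k * z ^ k) x) :
    HasSum (fun n => (fun n => match n with | 0 => (0:ℂ) | (m+1) => b m) n * z ^ n) (z * x) := by
  set b' : ℕ → ℂ := fun n => match n with | 0 => (0:ℂ) | (m+1) => b m with hb'
  have h1 : HasSum (fun n => b' (n+1) * z ^ (n+1)) (z * x) := by
    have := h.mul_left z
    apply this.congr_fun
    intro k
    show b k * z ^ (k+1) = z * (b k * z ^ k)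
    ring
  have := (hasSum_nat_add_iff (f := fun n => b' n * z ^ n) 1).mp h1
  simpa [hb'] using this

set_option maxHeartbeats 1000000
section Cara

variable {q : ℂ → ℂ} (hq : DifferentiableOn ℂ q (ball (0:ℂ) 1))
  {r : ℝ} (hr0 : 0 < r) (hr1 : r < 1)

include hq hr0 hr1

lemma aux_S1 (n : ℕ) :
    ∫ θ in (0:ℝ)..2*π, Complex.exp (-(θ*I))^n * q (circleMap 0 r θ) =
      2*π*(r:ℂ)^n * auxTC q n := by
  set R : NNReal := r.toNNReal with hRdef
  have hRr : (R:ℝ) = r := Real.coe_toNNReal r hr0.le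
  have hp : HasFPowerSeriesOnBall q (cauchyPowerSeries q 0 (R:ℝ)) 0 R :=
    DifferentiableOn.hasFPowerSeriesOnBall
      (hq.mono (closedBall_subset_ball (by rw [hRr]; exact hr1)))
      (by rw [← NNReal.coe_pos, hRr]; exact hr0)
  rw [hRr] at hp
  have hcoeff : (cauchyPowerSeries q 0 r).coeff n = auxTC q n := aux_coeff_eq_tc hp n
  have happ := cauchyPowerSeries_apply q 0 r n 1
  have hcoeff' : (cauchyPowerSeries q 0 r n fun _ => (1:ℂ)) = auxTC q n := by
    rw [← hcoeff]; rfl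
  rw [hcoeff'] at happ
  -- unfold the circle integral
  rw [circleIntegral] at happ
  have hint : ∀ θ : ℝ, (deriv (circleMap 0 r) θ) •
      (((1:ℂ) / (circleMap 0 r θ - 0)) ^ n • (circleMap 0 r θ - 0)⁻¹ • q (circleMap 0 r θ))
      = (I * ((r:ℂ)⁻¹)^n) * (Complex.exp (-(θ*I))^n * q (circleMap 0 r θ)) := by
    intro θ
    rw [deriv_circleMap, circleMap_zero]
    have he : Complex.exp (θ*I) ≠ 0 := Complex.exp_ne_zero _
    have hrne : (r:ℂ) ≠ 0 := by exact_mod_cast hr0.ne'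
    rw [Complex.exp_neg]
    simp only [smul_eq_mul, sub_zero]
    field_simp
    ring
  rw [intervalIntegral.integral_congr (fun θ _ => hint θ), intervalIntegral.integral_const_mul]
    at happ
  have hIr : (I * ((r:ℂ)⁻¹)^n) ≠ 0 := by
    apply mul_ne_zero Complex.I_ne_zero
    apply pow_ne_zero
    exact inv_ne_zero (by exact_mod_cast hr0.ne')
  have hpi : (π : ℂ) ≠ 0 := by exact_mod_cast Real.pi_ne_zero
  have hrne : (r:ℂ) ≠ 0 := by exact_mod_cast hr0.ne'
  rw [smul_eq_mul] at happ
  set J := ∫ θ in (0:ℝ)..2*π, Complex.exp (-(θ*I))^n * q (circleMap 0 r θ) with hJ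
  field_simp at happ
  have hrn : (r:ℂ)^n * (1/(r:ℂ))^n = 1 := by rw [← mul_pow, mul_one_div_cancel hrne, one_pow]
  linear_combination (-(r:ℂ)^n) * happ - J * hrn

lemma aux_qcont : Continuous fun θ : ℝ => q (circleMap 0 r θ) := by
  apply ContinuousOn.comp_continuous hq.continuousOn (continuous_circleMap 0 r)
  intro θ
  rw [mem_ball_zero_iff]
  have : ‖circleMap 0 r θ‖ = |r| := norm_circleMap_zero r θ
  rw [this,
    abs_of_pos hr0]
  exact hr1

lemma aux_S2 (k : ℕ) :
    ∫ θ in (0:ℝ)..2*π, Complex.exp (θ*I)^(k+1) * q (circleMap 0 r θ) = 0 := by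
  have hzero : (∮ z in C(0, r), z ^ k * q z) = 0 := by
    apply Complex.circleIntegral_eq_zero_of_differentiable_on_off_countable hr0.le
      Set.countable_empty
    · apply ContinuousOn.mul (continuous_pow k).continuousOn
      exact hq.continuousOn.mono ((closedBall_subset_ball hr1))
    · intro z hz
      have hz1 : z ∈ ball (0:ℂ) 1 := ball_subset_ball hr1.le hz.1
      apply DifferentiableAt.mul (differentiableAt_pow k)
      exact (hq.differentiableAt (isOpen_ball.mem_nhds hz1))
  rw [circleIntegral] at hzero
  have hint : ∀ θ : ℝ, (deriv (circleMap 0 r) θ) • ((circleMap 0 r θ) ^ k * q (circleMap 0 r θ))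
      = (I * (r:ℂ)^(k+1)) * (Complex.exp (θ*I)^(k+1) * q (circleMap 0 r θ)) := by
    intro θ
    rw [deriv_circleMap, circleMap_zero]
    simp only [smul_eq_mul]
    ring
  rw [intervalIntegral.integral_congr (fun θ _ => hint θ),
    intervalIntegral.integral_const_mul] at hzero
  have hIr : (I * (r:ℂ)^(k+1)) ≠ 0 :=
    mul_ne_zero Complex.I_ne_zero (pow_ne_zero _ (by exact_mod_cast hr0.ne'))
  exact (mul_eq_zero.mp hzero).resolve_left hIr

lemma aux_S3 (k : ℕ) :
    ∫ θ in (0:ℝ)..2*π, Complex.exp (-(θ*I))^(k+1) * conj (q (circleMap 0 r θ)) = 0 := by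
  have h2 := aux_S2 hq hr0 hr1 k
  have hconj : ∀ θ : ℝ, Complex.exp (-(θ*I))^(k+1) * conj (q (circleMap 0 r θ))
      = conj (Complex.exp (θ*I)^(k+1) * q (circleMap 0 r θ)) := by
    intro θ
    rw [map_mul, map_pow, ← Complex.exp_conj]
    congr 3
    simp [Complex.conj_ofReal]
  rw [intervalIntegral.integral_congr (fun θ _ => hconj θ)]
  have h0le : (0:ℝ) ≤ 2*π := by positivity
  rw [intervalIntegral.integral_of_le h0le] at h2 ⊢
  rw [integral_conj, h2, map_zero]

lemma aux_cara_r (hq0 : q 0 = 1) (hre : ∀ z ∈ ball (0:ℂ) 1, 0 < (q z).re) (k : ℕ) :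
    ‖auxTC q (k+1)‖ * r^(k+1) ≤ 2 := by
  have h0le : (0:ℝ) ≤ 2*π := by positivity
  have hcont := aux_qcont hq hr0 hr1
  have hmemb : ∀ θ : ℝ, circleMap 0 r θ ∈ ball (0:ℂ) 1 := by
    intro θ
    rw [mem_ball_zero_iff]
    rw [norm_circleMap_zero r θ,
      abs_of_pos hr0]
    exact hr1
  have hexp : Continuous fun θ : ℝ => Complex.exp (-(θ*I)) :=
    Complex.continuous_exp.comp (Continuous.neg (Complex.continuous_ofReal.mul continuous_const))
  have i1 : IntervalIntegrable
      (fun θ : ℝ => Complex.exp (-(θ*I))^(k+1) * q (circleMap 0 r θ))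
      MeasureTheory.volume 0 (2*π) := ((hexp.pow _).mul hcont).intervalIntegrable _ _
  have i2 : IntervalIntegrable
      (fun θ : ℝ => Complex.exp (-(θ*I))^(k+1) * conj (q (circleMap 0 r θ)))
      MeasureTheory.volume 0 (2*π) :=
    ((hexp.pow _).mul (continuous_star.comp hcont)).intervalIntegrable _ _
  have h1 := aux_S1 hq hr0 hr1 (k+1)
  have h3 := aux_S3 hq hr0 hr1 k
  have h4 : ∫ θ in (0:ℝ)..2*π,
      Complex.exp (-(θ*I))^(k+1) * (2*(((q (circleMap 0 r θ)).re : ℝ) : ℂ))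
      = 2*π*(r:ℂ)^(k+1) * auxTC q (k+1) := by
    have hsplit : ∀ θ : ℝ, Complex.exp (-(θ*I))^(k+1) * (2*(((q (circleMap 0 r θ)).re : ℝ) : ℂ))
        = Complex.exp (-(θ*I))^(k+1) * q (circleMap 0 r θ)
          + Complex.exp (-(θ*I))^(k+1) * conj (q (circleMap 0 r θ)) := by
      intro θ
      rw [← mul_add]
      congr 1
      rw [Complex.add_conj]
      push_cast
      ring
    rw [intervalIntegral.integral_congr (fun θ _ => hsplit θ),
      intervalIntegral.integral_add i1 i2, h1, h3, add_zero]
  -- norm bound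
  have hnorm : ∀ θ : ℝ,
      ‖Complex.exp (-(θ*I))^(k+1) * (2*(((q (circleMap 0 r θ)).re : ℝ) : ℂ))‖
      = 2 * (q (circleMap 0 r θ)).re := by
    intro θ
    rw [norm_mul, norm_pow, Complex.norm_exp]
    have : (-((θ:ℂ)*I)).re = 0 := by simp
    rw [this, Real.exp_zero, one_pow, one_mul]
    have h2 : (2*(((q (circleMap 0 r θ)).re : ℝ) : ℂ)) = (((2*(q (circleMap 0 r θ)).re : ℝ)) : ℂ) := by
      push_cast; ring
    rw [h2, Complex.norm_real, Real.norm_eq_abs,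
      abs_of_pos (by linarith [hre _ (hmemb θ)] : (0:ℝ) < 2*(q (circleMap 0 r θ)).re)]
  have hintre : (∫ θ in (0:ℝ)..2*π, (q (circleMap 0 r θ)).re) = 2*π := by
    have h0 := aux_S1 hq hr0 hr1 0
    simp only [pow_zero, one_mul, mul_one] at h0
    rw [auxTC_zero, hq0, mul_one] at h0
    have hint : IntervalIntegrable (fun θ : ℝ => q (circleMap 0 r θ))
        MeasureTheory.volume 0 (2*π) := hcont.intervalIntegrable _ _
    have : (∫ θ in (0:ℝ)..2*π, (q (circleMap 0 r θ)).re)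
        = (∫ θ in (0:ℝ)..2*π, q (circleMap 0 r θ)).re := by
      rw [intervalIntegral.integral_of_le h0le, intervalIntegral.integral_of_le h0le]
      exact integral_re ((intervalIntegrable_iff_integrableOn_Ioc_of_le h0le).mp hint)
    rw [this, h0]
    simp
  have hbound : ‖(2*π*(r:ℂ)^(k+1) * auxTC q (k+1))‖ ≤ 2*(2*π) := by
    rw [← h4]
    calc ‖∫ θ in (0:ℝ)..2*π, Complex.exp (-(θ*I))^(k+1) * (2*(((q (circleMap 0 r θ)).re : ℝ) : ℂ))‖
        ≤ ∫ θ in (0:ℝ)..2*π, ‖Complex.exp (-(θ*I))^(k+1) * (2*(((q (circleMap 0 r θ)).re : ℝ) : ℂ))‖ :=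
          intervalIntegral.norm_integral_le_integral_norm h0le
      _ = ∫ θ in (0:ℝ)..2*π, 2 * (q (circleMap 0 r θ)).re :=
          intervalIntegral.integral_congr (fun θ _ => hnorm θ)
      _ = 2 * ∫ θ in (0:ℝ)..2*π, (q (circleMap 0 r θ)).re :=
          intervalIntegral.integral_const_mul 2 _
      _ = 2*(2*π) := by rw [hintre]
  have hnn : ‖(2*π*(r:ℂ)^(k+1) * auxTC q (k+1))‖ = (2*π*r^(k+1)) * ‖auxTC q (k+1)‖ := by
    rw [norm_mul]
    congr 1
    have : (2*π*(r:ℂ)^(k+1)) = (((2*π*r^(k+1) : ℝ)) : ℂ) := by push_cast; ring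
    rw [this, Complex.norm_real, Real.norm_eq_abs, abs_of_pos (by positivity)]
  rw [hnn] at hbound
  have hpi := Real.pi_pos
  have hrp : 0 < r^(k+1) := pow_pos hr0 _
  nlinarith [norm_nonneg (auxTC q (k+1))]

end Cara

lemma aux_cara {q : ℂ → ℂ} (hq : DifferentiableOn ℂ q (ball (0:ℂ) 1))
    (hq0 : q 0 = 1) (hre : ∀ z ∈ ball (0:ℂ) 1, 0 < (q z).re) :
    ∀ k : ℕ, 1 ≤ k → ‖auxTC q k‖ ≤ 2 := by
  rintro (_|j) hk
  · omega
  have htend : Filter.Tendsto (fun r : ℝ => ‖auxTC q (j+1)‖ * r^(j+1))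
      (nhdsWithin 1 (Set.Iio 1)) (nhds (‖auxTC q (j+1)‖)) := by
    have : Continuous (fun r : ℝ => ‖auxTC q (j+1)‖ * r^(j+1)) := by continuity
    have h := (this.tendsto 1).mono_left (nhdsWithin_le_nhds (s := Set.Iio 1))
    simpa using h
  apply le_of_tendsto htend
  filter_upwards [Ioo_mem_nhdsLT_of_mem (by constructor <;> norm_num : (1:ℝ) ∈ Set.Ioc 0 1)]
    with r hr
  exact aux_cara_r hq hr.1 hr.2 hq0 hre j

/-- `B m = (m+1) * coefA α (m+1)`, the bound for the (m)-th coefficient of `h'`. -/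
noncomputable def auxB (α : ℝ) (m : ℕ) : ℝ := (m+1) * coefA α (m+1)

lemma coefA_one (α : ℝ) : coefA α 1 = 1 := by
  simp [coefA]

lemma auxB_zero (α : ℝ) : auxB α 0 = 1 := by
  simp [auxB, coefA_one]

lemma coefA_succ (α : ℝ) (k : ℕ) (hk : 1 ≤ k) :
    coefA α (k+1) = coefA α k * (((k:ℝ)+1) - 2*α) / ((k:ℝ)+1) := by
  rw [coefA, coefA, Finset.prod_Icc_succ_top (by omega : 2 ≤ k+1), Nat.factorial_succ]
  have h1 : ((k:ℝ)+1) ≠ 0 := by positivity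
  have h2 : ((k.factorial : ℝ)) ≠ 0 := Nat.cast_ne_zero.mpr k.factorial_ne_zero
  push_cast
  field_simp

lemma auxB_key (α : ℝ) (m : ℕ) :
    ((m:ℝ)+1) * auxB α (m+1) = (((m:ℝ)+2) - 2*α) * auxB α m := by
  rw [auxB, auxB, coefA_succ α (m+1) (by omega)]
  have h1 : ((m:ℝ)+1+1) ≠ 0 := by positivity
  push_cast
  field_simp
  ring

lemma auxB_nonneg {α : ℝ} (hα1 : α < 1) (m : ℕ) : 0 ≤ auxB α m := by
  rw [auxB, coefA]
  apply mul_nonneg (by positivity)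
  apply mul_nonneg (by positivity)
  apply Finset.prod_nonneg
  intro j hj
  rw [Finset.mem_Icc] at hj
  have : (2:ℝ) ≤ (j:ℝ) := by exact_mod_cast hj.1
  linarith

lemma auxB_sum (α : ℝ) (m : ℕ) :
    2*(1-α) * ∑ j ∈ Finset.range (m+1), auxB α j = ((m:ℝ)+1) * auxB α (m+1) := by
  induction m with
  | zero =>
    rw [auxB_key α 0]
    simp [auxB_zero]
    ring
  | succ m ih =>
    rw [Finset.sum_range_succ, mul_add, ih, auxB_key α (m+1)]
    have := auxB_key α m
    push_cast
    ring

end Aux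

/-- Sharp coefficient bound for the analytic part: `|a_n| ≤ A_n(α)`. -/
theorem coeff_bound_analytic_part (α : ℝ) (hα0 : 0 ≤ α) (hα1 : α < 1)
    (h g : ℂ → ℂ) (hf : MemF α h g) (a : ℕ → ℂ) (ha0 : a 0 = 0) (ha1 : a 1 = 1)
    (hrep : ∀ z ∈ ball (0 : ℂ) 1, HasSum (fun k : ℕ => a k * z ^ k) (h z)) :
    ∀ n : ℕ, 2 ≤ n → ‖a n‖ ≤ coefA α n := by
  obtain ⟨hhd, hgd, hh0, hg0, hh1, hne, hreP, -⟩ := hf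
  have hA : (0:ℝ) < 1 - α := by linarith
  have hd1 : DifferentiableOn ℂ (deriv h) (ball (0:ℂ) 1) := aux_deriv_diffOn hhd
  have hd2 : DifferentiableOn ℂ (deriv (deriv h)) (ball (0:ℂ) 1) := aux_deriv_diffOn hd1
  have ha : a = auxTC h := aux_uniq hrep (fun z hz => (aux_rep hhd hz).1)
  set c : ℕ → ℂ := auxTC (deriv h) with hc
  have hc0 : c 0 = 1 := by rw [hc, auxTC_zero, hh1]
  have hcast : ((1:ℂ) - (α:ℂ)) = (((1-α : ℝ)) : ℂ) := by push_cast; ring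
  have hα : ((1:ℂ) - (α:ℂ)) ≠ 0 := by
    rw [hcast]
    exact Complex.ofReal_ne_zero.mpr hA.ne'
  have hnorm1α : ‖(1:ℂ) - (α:ℂ)‖ = 1 - α := by
    rw [hcast, Complex.norm_real, Real.norm_eq_abs, abs_of_pos hA]
  set q : ℂ → ℂ := fun z => 1 + ((1:ℂ) - (α:ℂ))⁻¹ * (z * deriv (deriv h) z / deriv h z)
    with hqdef
  have hq : DifferentiableOn ℂ q (ball (0:ℂ) 1) := by
    apply DifferentiableOn.const_add
    apply DifferentiableOn.mul (differentiableOn_const _)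
    exact (differentiableOn_id.mul hd2).div hd1 hne
  have hq0 : q 0 = 1 := by simp [hqdef]
  have hreq : ∀ z ∈ ball (0:ℂ) 1, 0 < (q z).re := by
    intro z hz
    have hP := hreP z hz
    set w : ℂ := z * deriv (deriv h) z / deriv h z with hw
    have hwre : α - 1 < w.re := by
      rw [Complex.add_re, Complex.one_re] at hP
      linarith
    have hqre : (q z).re = 1 + (1-α)⁻¹ * w.re := by
      rw [hqdef]
      simp only [Complex.add_re, Complex.one_re]
      congr 1
      rw [hcast, ← Complex.ofReal_inv, Complex.re_ofReal_mul]
    rw [hqre]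
    have hkey : (1-α)⁻¹ * (α-1) < (1-α)⁻¹ * w.re :=
      mul_lt_mul_of_pos_left hwre (inv_pos.mpr hA)
    have : (1-α)⁻¹ * (α-1) = -1 := by field_simp; ring
    linarith
  have hqk := aux_cara hq hq0 hreq
  set u : ℕ → ℂ := fun k => ((1:ℂ) - (α:ℂ)) * (auxTC q k - if k = 0 then 1 else 0) with hu
  have hu0 : u 0 = 0 := by
    rw [hu]
    simp [auxTC_zero, hq0]
  have hubound : ∀ k : ℕ, ‖u (k+1)‖ ≤ 2*(1-α) := by
    intro k
    rw [hu]
    simp only [Nat.succ_ne_zero, if_false, sub_zero]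
    rw [norm_mul, hnorm1α]
    have := hqk (k+1) (by omega)
    nlinarith [norm_nonneg (auxTC q (k+1))]
  -- the coefficient recursion
  set b₁ : ℕ → ℂ := fun n => (fun n => match n with
    | 0 => (0:ℂ) | (m+1) => auxTC (deriv (deriv h)) m) n with hb₁
  set b₂ : ℕ → ℂ := fun n => ∑ k ∈ Finset.range (n+1), u k * c (n-k) with hb₂
  have rep1 : ∀ z ∈ ball (0:ℂ) 1, HasSum (fun n => b₁ n * z ^ n)
      (z * deriv (deriv h) z) := fun z hz => aux_shift (aux_rep hd2 hz).1
  have rep2 : ∀ z ∈ ball (0:ℂ) 1, HasSum (fun n => b₂ n * z ^ n)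
      (z * deriv (deriv h) z) := by
    intro z hz
    have hδ : HasSum (fun k : ℕ => (if k = 0 then (1:ℂ) else 0) * z ^ k) 1 := by
      have h0 := hasSum_ite_eq 0 (1:ℂ)
      apply h0.congr_fun
      intro k
      by_cases hk : k = 0
      · subst hk; simp
      · simp [hk]
    have hδn : Summable (fun k : ℕ => ‖(if k = 0 then (1:ℂ) else 0) * z ^ k‖) := by
      apply summable_of_ne_finset_zero (s := {0})
      intro k hk
      rw [Finset.mem_singleton] at hk
      simp [hk]
    have hq1 : HasSum (fun k => u k * z ^ k) (((1:ℂ)-(α:ℂ)) * (q z - 1)) := by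
      have := (((aux_rep hq hz).1).sub hδ).mul_left ((1:ℂ)-(α:ℂ))
      apply this.congr_fun
      intro k
      rw [hu]
      ring
    have hq2 : Summable (fun k => ‖u k * z ^ k‖) := by
      apply Summable.of_nonneg_of_le (fun k => norm_nonneg _)
        (f := fun k => ‖(1:ℂ)-(α:ℂ)‖ *
          (‖auxTC q k * z ^ k‖ + ‖(if k = 0 then (1:ℂ) else 0) * z ^ k‖))
      · intro k
        have heq : u k * z ^ k
            = ((1:ℂ)-(α:ℂ)) * (auxTC q k * z ^ k - (if k = 0 then (1:ℂ) else 0) * z ^ k) := by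
          rw [hu]; ring
        rw [heq, norm_mul]
        exact mul_le_mul_of_nonneg_left (norm_sub_le _ _) (norm_nonneg _)
      · exact (((aux_rep hq hz).2).add hδn).mul_left _
    have hcp := aux_cauchy_prod hq1 hq2 (aux_rep hd1 hz).1 (aux_rep hd1 hz).2
    have hval : ((1:ℂ)-(α:ℂ)) * (q z - 1) * deriv h z = z * deriv (deriv h) z := by
      rw [hqdef]
      have hzne := hne z hz
      field_simp
      ring
    rwa [hval] at hcp
  have hseq : b₁ = b₂ := aux_uniq rep1 rep2
  -- norm of (m+1) as a complex number
  have hnormnat : ∀ m : ℕ, ‖((m:ℂ)+1)‖ = (m:ℝ)+1 := by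
    intro m
    rw [show ((m:ℂ)+1) = (((m:ℝ)+1 : ℝ) : ℂ) by push_cast; ring, Complex.norm_real,
      Real.norm_eq_abs, abs_of_pos (by positivity)]
  -- the coefficient bound by strong induction
  have hcbound : ∀ m : ℕ, ‖c m‖ ≤ auxB α m := by
    intro m
    induction m using Nat.strong_induction_on with
    | _ m ih =>
      match m with
      | 0 =>
        rw [hc0, auxB_zero]
        simp
      | (m+1) =>
        have he : ((m:ℂ)+1) * c (m+1) = ∑ k ∈ Finset.range (m+2), u k * c (m+1-k) := by
          have h1 := congrFun hseq (m+1)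
          have h2 : auxTC (deriv (deriv h)) m = ((m:ℂ)+1) * c (m+1) := aux_tc_deriv (deriv h) m
          rw [hb₁, hb₂] at h1
          simpa [← h2] using h1
        have hsumle : ((m:ℝ)+1) * ‖c (m+1)‖ ≤ 2*(1-α) * ∑ j ∈ Finset.range (m+1), auxB α j := by
          calc ((m:ℝ)+1) * ‖c (m+1)‖ = ‖((m:ℂ)+1) * c (m+1)‖ := by
                rw [norm_mul, hnormnat m]
            _ = ‖∑ k ∈ Finset.range (m+2), u k * c (m+1-k)‖ := by rw [he]
            _ ≤ ∑ k ∈ Finset.range (m+2), ‖u k * c (m+1-k)‖ := norm_sum_le _ _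
            _ = (∑ k ∈ Finset.range (m+1), ‖u (k+1) * c (m+1-(k+1))‖)
                + ‖u 0 * c (m+1-0)‖ := Finset.sum_range_succ' _ _
            _ ≤ ∑ k ∈ Finset.range (m+1), 2*(1-α) * auxB α (m-k) := by
                rw [hu0]
                simp only [zero_mul, norm_zero, add_zero, Nat.succ_sub_succ]
                apply Finset.sum_le_sum
                intro k hk
                rw [Finset.mem_range] at hk
                rw [norm_mul]
                have h4 := ih (m-k) (by omega)
                have h5 := hubound k
                have h6 := auxB_nonneg hα1 (m-k)
                nlinarith [norm_nonneg (u (k+1)), norm_nonneg (c (m-k))]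
            _ = 2*(1-α) * ∑ j ∈ Finset.range (m+1), auxB α j := by
                rw [← Finset.mul_sum]
                congr 1
                rw [← Finset.sum_range_reflect]
                apply Finset.sum_congr rfl
                intro j hj
                rw [Finset.mem_range] at hj
                congr 1
                omega
        rw [auxB_sum] at hsumle
        have hm1 : (0:ℝ) < (m:ℝ)+1 := by positivity
        exact le_of_mul_le_mul_left hsumle hm1
  -- conclude
  intro n hn
  obtain ⟨m, rfl⟩ : ∃ m, n = m + 1 := ⟨n-1, by omega⟩
  have h2 : c m = ((m:ℂ)+1) * auxTC h (m+1) := aux_tc_deriv h m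
  have hcm := hcbound m
  rw [h2, norm_mul, hnormnat m] at hcm
  rw [ha]
  show ‖auxTC h (m+1)‖ ≤ coefA α (m+1)
  rw [auxB] at hcm
  have hm1 : (0:ℝ) < (m:ℝ)+1 := by positivity
  exact le_of_mul_le_mul_left hcm hm1
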